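/- (Lemma 2(iv), scenario H₂.) Under the perturbation conditions (D₁, E₁, H₂), for every i ∈ {1, …, N} and 0 ≤ k ≤ i−1 one has Γ_{k+1,i,−}(ε)/Γ_{k,i−1,+}(ε) = A*_{k,i}[−γ_k] ε^{−γ_k} + A*_{k,i}[−γ_k+1] ε^{−γ_k+1} + o*_{k,i}(ε^{−γ_k+1}) for ε ∈ (0, ε₀], where o*_{k,i}(ε^{−γ_k+1})/ε^{−γ_k+1} → 0 as ε → 0+, A*_{k,i}[−γ_k] = A_{k+1,i,−}[0]/A_{k,i−1,+}[γ_k] > 0 and A*_{k,i}[−γ_k+1] = ( A_{k+1,i,−}[1] A_{k,i−1,+}[γ_k] − A_{k+1,i,−}[0] A_{k,i−1,+}[γ_k+1] ) / A_{k,i−1,+}[γ_k]², where A_{k+1,i,−}[0], A_{k+1,i,−}[1] are the first two coefficients in the expansion Γ_{k+1,i,−}(ε) = A_{k+1,i,−}[0] + A_{k+1,i,−}[1] ε + o(ε) and A_{k,i−1,+}[γ_k], A_{k,i−1,+}[γ_k+1] are the first two coefficients in the expansion Γ_{k,i−1,+}(ε) = A_{k,i−1,+}[γ_k] ε^{γ_k}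 + A_{k,i−1,+}[γ_k+1] ε^{γ_k+1} + o(ε^{γ_k+1}). -/

import Mathlib

open Filter Finset Topology

noncomputable section

/-- Two-term Laurent asymptotic expansion:
`f ε = c0 * ε^h + c1 * ε^(h+1) + o(ε^(h+1))` as `ε → 0+`. -/
def laurent2 (f : ℝ → ℝ) (h : ℤ) (c0 c1 : ℝ) : Prop :=
  Filter.Tendsto (fun ε : ℝ => (f ε - c0 * ε ^ h - c1 * ε ^ (h + 1)) / ε ^ (h + 1))
    (nhdsWithin 0 (Set.Ioi 0)) (nhds 0)

/-- `Γ_{i,j,σ}(ε) = p_{i,σ}(ε) p_{i+1,σ}(ε) ⋯ p_{j,σ}(ε)`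
(the sign σ is encoded by a `Bool`: `false` = −, `true` = +). -/
def Gam (p : ℕ → Bool → ℝ → ℝ) (σ : Bool) (i j : ℕ) (ε : ℝ) : ℝ :=
  ∏ m ∈ Finset.Icc i j, p m σ ε

/-- `e_i(ε) = e_{i,−}(ε) + e_{i,+}(ε)`. -/
def eT (e : ℕ → Bool → ℝ → ℝ) (i : ℕ) (ε : ℝ) : ℝ := e i false ε + e i true ε

/-- The expected return time
`E_{ii}(ε) = e_i(ε) + ∑_{k<i} e_k(ε) Γ_{k+1,i,−}(ε)/Γ_{k,i−1,+}(ε)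
            + ∑_{i<k≤N} e_k(ε) Γ_{i,k−1,+}(ε)/Γ_{i+1,k,−}(ε)`. -/
def ret (p e : ℕ → Bool → ℝ → ℝ) (N i : ℕ) (ε : ℝ) : ℝ :=
  eT e i ε
    + ∑ k ∈ Finset.range i, eT e k ε * (Gam p false (k + 1) i ε / Gam p true k (i - 1) ε)
    + ∑ k ∈ Finset.Icc (i + 1) N, eT e k ε * (Gam p true i (k - 1) ε / Gam p false (i + 1) k ε)

/-- The stationary probability `π_i(ε) = e_i(ε) / E_{ii}(ε)`. -/
def statPi (p e : ℕ → Bool → ℝ → ℝ) (N i : ℕ) (ε : ℝ) : ℝ := eT e i ε / ret p e N i ε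

/-- `b_i[l] = b_{i,−}[l] + b_{i,+}[l]`. -/
def bT (b : ℕ → Bool → ℕ → ℝ) (i l : ℕ) : ℝ := b i false l + b i true l

/-- `γ_i = 1` if `i = 0` and `γ_i = 0` otherwise. -/
def gam (i : ℕ) : ℕ := if i = 0 then 1 else 0

/-- `A_{i,j,+}[γ_i]`, the leading coefficient of `Γ_{i,j,+}(ε)`
(each factor `m` contributes its leading coefficient `a_{m,+}[γ_m]`). -/
def A0p (a : ℕ → Bool → ℕ → ℝ) (i j : ℕ) : ℝ :=
  ∏ m ∈ Finset.Icc i j, a m true (gam m)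

/-- `A_{i,j,+}[γ_i + 1] = ∑_{n_i + ⋯ + n_j = 1} a_{i,+}[γ_i + n_i] a_{i+1,+}[n_{i+1}] ⋯ a_{j,+}[n_j]`. -/
def A1p (a : ℕ → Bool → ℕ → ℝ) (i j : ℕ) : ℝ :=
  ∑ m ∈ Finset.Icc i j, a m true (gam m + 1) * ∏ k ∈ (Finset.Icc i j).erase m, a k true (gam k)

/-- `A_{i,j,−}[0] = a_{i,−}[0] ⋯ a_{j,−}[0]`. -/
def A0m (a : ℕ → Bool → ℕ → ℝ) (i j : ℕ) : ℝ :=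
  ∏ m ∈ Finset.Icc i j, a m false 0

/-- `A_{i,j,−}[1] = ∑_{n_i + ⋯ + n_j = 1} a_{i,−}[n_i] ⋯ a_{j,−}[n_j]`. -/
def A1m (a : ℕ → Bool → ℕ → ℝ) (i j : ℕ) : ℝ :=
  ∑ m ∈ Finset.Icc i j, a m false 1 * ∏ k ∈ (Finset.Icc i j).erase m, a k false 0

lemma laurent2_iff (f : ℝ → ℝ) (h : ℤ) (c0 c1 : ℝ) :
    laurent2 f h c0 c1 ↔
      Filter.Tendsto (fun ε : ℝ => (f ε / ε ^ h - c0) / ε)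
        (nhdsWithin 0 (Set.Ioi 0)) (nhds c1) := by
  have heq : ∀ᶠ ε in nhdsWithin (0:ℝ) (Set.Ioi 0),
      (f ε - c0 * ε ^ h - c1 * ε ^ (h + 1)) / ε ^ (h + 1)
        = (f ε / ε ^ h - c0) / ε - c1 := by
    filter_upwards [self_mem_nhdsWithin] with ε hε
    have hε0 : (ε : ℝ) ≠ 0 := ne_of_gt hε
    have h1 : (ε : ℝ) ^ h ≠ 0 := zpow_ne_zero _ hε0
    rw [zpow_add_one₀ hε0]
    field_simp
  unfold laurent2
  rw [tendsto_congr' heq]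
  exact tendsto_sub_nhds_zero_iff

lemma laurent2_one : laurent2 (fun _ => 1) 0 1 0 := by
  unfold laurent2
  have : (fun ε : ℝ => ((1:ℝ) - 1 * ε ^ (0:ℤ) - 0 * ε ^ ((0:ℤ) + 1)) / ε ^ ((0:ℤ) + 1))
      = fun _ => 0 := by
    funext ε; simp
  rw [this]
  exact tendsto_const_nhds

lemma laurent2_mul {f g : ℝ → ℝ} {h h' : ℤ} {c0 c1 d0 d1 : ℝ}
    (hf : laurent2 f h c0 c1) (hg : laurent2 g h' d0 d1) :
    laurent2 (fun ε => f ε * g ε) (h + h') (c0 * d0) (c0 * d1 + c1 * d0) := by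
  rw [laurent2_iff] at hf hg ⊢
  set u : ℝ → ℝ := fun ε => (f ε / ε ^ h - c0) / ε with hu
  set v : ℝ → ℝ := fun ε => (g ε / ε ^ h' - d0) / ε with hv
  have hid : Filter.Tendsto (fun ε : ℝ => ε) (nhdsWithin 0 (Set.Ioi 0)) (nhds 0) :=
    tendsto_id.mono_left nhdsWithin_le_nhds
  have hlim : Filter.Tendsto (fun ε : ℝ => c0 * v ε + u ε * d0 + ε * (u ε * v ε))
      (nhdsWithin 0 (Set.Ioi 0)) (nhds (c0 * d1 + c1 * d0 + 0 * (c1 * d1))) :=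
    ((tendsto_const_nhds.mul hg).add (hf.mul tendsto_const_nhds)).add (hid.mul (hf.mul hg))
  rw [show c0 * d1 + c1 * d0 + 0 * (c1 * d1) = c0 * d1 + c1 * d0 by ring] at hlim
  refine hlim.congr' ?_
  filter_upwards [self_mem_nhdsWithin] with ε hε
  have hε0 : (ε : ℝ) ≠ 0 := ne_of_gt hε
  have h1 : (ε : ℝ) ^ h ≠ 0 := zpow_ne_zero _ hε0
  have h2 : (ε : ℝ) ^ h' ≠ 0 := zpow_ne_zero _ hε0
  have hF : f ε / ε ^ h = c0 + ε * u ε := by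
    simp only [hu]; field_simp; ring
  have hG : g ε / ε ^ h' = d0 + ε * v ε := by
    simp only [hv]; field_simp; ring
  have hsplit : f ε * g ε / ε ^ (h + h') = (f ε / ε ^ h) * (g ε / ε ^ h') := by
    rw [zpow_add₀ hε0, div_mul_div_comm]
  rw [hsplit, hF, hG]
  field_simp
  ring

lemma laurent2_div {f g : ℝ → ℝ} {h h' : ℤ} {c0 c1 d0 d1 : ℝ} (hd0 : d0 ≠ 0)
    (hf : laurent2 f h c0 c1) (hg : laurent2 g h' d0 d1) :
    laurent2 (fun ε => f ε / g ε) (h - h') (c0 / d0) ((c1 * d0 - c0 * d1) / d0 ^ 2) := by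
  rw [laurent2_iff] at hf hg ⊢
  set u : ℝ → ℝ := fun ε => (f ε / ε ^ h - c0) / ε with hu
  set v : ℝ → ℝ := fun ε => (g ε / ε ^ h' - d0) / ε with hv
  have hid : Filter.Tendsto (fun ε : ℝ => ε) (nhdsWithin 0 (Set.Ioi 0)) (nhds 0) :=
    tendsto_id.mono_left nhdsWithin_le_nhds
  have hGlim : Filter.Tendsto (fun ε : ℝ => d0 + ε * v ε) (nhdsWithin 0 (Set.Ioi 0))
      (nhds (d0 + 0 * d1)) := tendsto_const_nhds.add (hid.mul hg)
  rw [show d0 + 0 * d1 = d0 by ring] at hGlim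
  have hne : ∀ᶠ ε in nhdsWithin (0:ℝ) (Set.Ioi 0), d0 + ε * v ε ≠ 0 :=
    hGlim.eventually_ne hd0
  have hlim : Filter.Tendsto (fun ε : ℝ => (u ε * d0 - c0 * v ε) / (d0 * (d0 + ε * v ε)))
      (nhdsWithin 0 (Set.Ioi 0)) (nhds ((c1 * d0 - c0 * d1) / (d0 * d0))) := by
    have hnum : Filter.Tendsto (fun ε : ℝ => u ε * d0 - c0 * v ε)
        (nhdsWithin 0 (Set.Ioi 0)) (nhds (c1 * d0 - c0 * d1)) :=
      (hf.mul tendsto_const_nhds).sub (tendsto_const_nhds.mul hg)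
    have hden : Filter.Tendsto (fun ε : ℝ => d0 * (d0 + ε * v ε))
        (nhdsWithin 0 (Set.Ioi 0)) (nhds (d0 * d0)) :=
      tendsto_const_nhds.mul hGlim
    exact hnum.div hden (by simpa using mul_ne_zero hd0 hd0)
  rw [show (c1 * d0 - c0 * d1) / (d0 * d0) = (c1 * d0 - c0 * d1) / d0 ^ 2 by ring_nf] at hlim
  refine hlim.congr' ?_
  filter_upwards [self_mem_nhdsWithin, hne] with ε hε hGne
  have hε0 : (ε : ℝ) ≠ 0 := ne_of_gt hε
  have h1 : (ε : ℝ) ^ h ≠ 0 := zpow_ne_zero _ hε0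
  have h2 : (ε : ℝ) ^ h' ≠ 0 := zpow_ne_zero _ hε0
  have hF : f ε / ε ^ h = c0 + ε * u ε := by
    simp only [hu]; field_simp; ring
  have hG : g ε / ε ^ h' = d0 + ε * v ε := by
    simp only [hv]; field_simp; ring
  have hsplit : f ε / g ε / ε ^ (h - h') = (f ε / ε ^ h) / (g ε / ε ^ h') := by
    rw [zpow_sub₀ hε0, div_div_div_comm]
  rw [hsplit, hF, hG]
  rw [div_sub_div _ _ hGne hd0, div_div,
    div_eq_div_iff (mul_ne_zero hd0 hGne) (mul_ne_zero (mul_ne_zero hGne hd0) hε0)]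
  ring

lemma laurent2_prod (s : Finset ℕ) (f : ℕ → ℝ → ℝ) (h : ℕ → ℤ) (c0 c1 : ℕ → ℝ)
    (H : ∀ m ∈ s, laurent2 (f m) (h m) (c0 m) (c1 m)) :
    laurent2 (fun ε => ∏ m ∈ s, f m ε) (∑ m ∈ s, h m) (∏ m ∈ s, c0 m)
      (∑ m ∈ s, c1 m * ∏ k ∈ s.erase m, c0 k) := by
  induction s using Finset.cons_induction with
  | empty => simpa using laurent2_one
  | cons a s ha ih =>
    have hrest := ih (fun m hm => H m (Finset.mem_cons_of_mem hm))
    have hma := H a (Finset.mem_cons_self a s)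
    have hmul := laurent2_mul hma hrest
    simp only [Finset.prod_cons, Finset.sum_cons]
    have hcoef : c1 a * ∏ k ∈ (Finset.cons a s ha).erase a, c0 k
        + ∑ m ∈ s, c1 m * ∏ k ∈ (Finset.cons a s ha).erase m, c0 k
        = c0 a * (∑ m ∈ s, c1 m * ∏ k ∈ s.erase m, c0 k) + c1 a * ∏ m ∈ s, c0 m := by
      rw [Finset.erase_cons]
      have : ∀ m ∈ s, c1 m * ∏ k ∈ (Finset.cons a s ha).erase m, c0 k
          = c0 a * (c1 m * ∏ k ∈ s.erase m, c0 k) := by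
        intro m hm
        have ham : a ≠ m := fun hh => ha (hh ▸ hm)
        have herase : (Finset.cons a s ha).erase m = Finset.cons a (s.erase m)
            (fun hh => ha (Finset.mem_of_mem_erase hh)) := by
          ext x
          simp only [Finset.mem_erase, Finset.mem_cons]
          constructor
          · rintro ⟨hx, hx2 | hx2⟩
            · exact Or.inl hx2
            · exact Or.inr ⟨hx, hx2⟩
          · rintro (rfl | ⟨hx, hx2⟩)
            · exact ⟨ham, Or.inl rfl⟩
            · exact ⟨hx, Or.inr hx2⟩
        rw [herase, Finset.prod_cons]
        ring
      rw [Finset.sum_congr rfl this, ← Finset.mul_sum]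
      ring
    rw [hcoef]
    exact hmul

/-- Lemma 2(iv), scenario H₂: under conditions (D₁, E₁, H₂), for `1 ≤ i ≤ N` and
`0 ≤ k ≤ i−1`,
`Γ_{k+1,i,−}(ε)/Γ_{k,i−1,+}(ε) = A*_{k,i}[−γ_k] ε^{−γ_k} + A*_{k,i}[−γ_k+1] ε^{−γ_k+1}
+ o(ε^{−γ_k+1})` with `A*_{k,i}[−γ_k] = A_{k+1,i,−}[0]/A_{k,i−1,+}[γ_k] > 0` and
`A*_{k,i}[−γ_k+1] = (A_{k+1,i,−}[1] A_{k,i−1,+}[γ_k] − A_{k+1,i,−}[0] A_{k,i−1,+}[γ_k+1])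
/ A_{k,i−1,+}[γ_k]²`. -/
theorem lemma2_iv_H2
    (N : ℕ) (hN : 1 ≤ N) (ε₀ : ℝ) (hε₀ : 0 < ε₀) (hε₁ : ε₀ ≤ 1)
    (p e : ℕ → Bool → ℝ → ℝ)
    (hpos : ∀ i ≤ N, ∀ σ : Bool, ∀ ε ∈ Set.Ioc (0 : ℝ) ε₀, 0 < p i σ ε ∧ 0 < e i σ ε)
    (hone : ∀ i ≤ N, ∀ ε ∈ Set.Ioc (0 : ℝ) ε₀, p i false ε + p i true ε = 1)
    (a b : ℕ → Bool → ℕ → ℝ)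
    (hD : ∀ i ≤ N, ∀ σ : Bool, ¬(i = 0 ∧ σ = true) →
      0 < a i σ 0 ∧ laurent2 (p i σ) 0 (a i σ 0) (a i σ 1))
    (hD0 : 0 < a 0 true 1 ∧ laurent2 (p 0 true) 1 (a 0 true 1) (a 0 true 2))
    (hE : ∀ i ≤ N, ∀ σ : Bool, ¬(i = 0 ∧ σ = true) →
      0 < b i σ 0 ∧ laurent2 (e i σ) 0 (b i σ 0) (b i σ 1))
    (hE0 : 0 < b 0 true 1 ∧ laurent2 (e 0 true) 1 (b 0 true 1) (b 0 true 2))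
    :
    ∀ i, 1 ≤ i → i ≤ N → ∀ k, k < i →
      laurent2 (fun ε => Gam p false (k + 1) i ε / Gam p true k (i - 1) ε) (-(gam k : ℤ))
          (A0m a (k + 1) i / A0p a k (i - 1))
          ((A1m a (k + 1) i * A0p a k (i - 1)
              - A0m a (k + 1) i * A1p a k (i - 1)) / (A0p a k (i - 1)) ^ 2) ∧
        0 < A0m a (k + 1) i / A0p a k (i - 1) := by
  intro i hi1 hiN k hki
  have hk_le : k ≤ i - 1 := Nat.le_pred_of_lt hki
  -- expansion of the minus product
  have hminus : laurent2 (fun ε => Gam p false (k + 1) i ε) 0 (A0m a (k + 1) i)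
      (A1m a (k + 1) i) := by
    have hsum0 : ∑ m ∈ Finset.Icc (k + 1) i, (0 : ℤ) = 0 := Finset.sum_const_zero
    have := laurent2_prod (Finset.Icc (k + 1) i) (fun m ε => p m false ε)
      (fun _ => 0) (fun m => a m false 0) (fun m => a m false 1)
      (fun m hm => (hD m (le_trans (Finset.mem_Icc.1 hm).2 hiN) false (by simp)).2)
    rw [hsum0] at this
    exact this
  -- expansion of the plus product
  have hplus : laurent2 (fun ε => Gam p true k (i - 1) ε) (gam k : ℤ) (A0p a k (i - 1))
      (A1p a k (i - 1)) := by
    have hsum : ∑ m ∈ Finset.Icc k (i - 1), ((gam m : ℤ)) = (gam k : ℤ) := by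
      simp only [gam, apply_ite (fun n : ℕ => (n : ℤ)), Nat.cast_one, Nat.cast_zero]
      rw [Finset.sum_ite_eq' (Finset.Icc k (i - 1)) 0 (fun _ => (1 : ℤ))]
      simp [Finset.mem_Icc, Nat.le_zero]
    have := laurent2_prod (Finset.Icc k (i - 1)) (fun m ε => p m true ε)
      (fun m => (gam m : ℤ)) (fun m => a m true (gam m)) (fun m => a m true (gam m + 1)) ?_
    · rw [hsum] at this
      exact this
    · intro m hm
      by_cases hm0 : m = 0
      · subst hm0
        simpa [gam] using hD0.2
      · have := (hD m (le_trans (le_trans (Finset.mem_Icc.1 hm).2 (Nat.sub_le _ _)) hiN)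
          true (by simp [hm0])).2
        simpa [gam, hm0] using this
  have hA0p_pos : 0 < A0p a k (i - 1) := by
    apply Finset.prod_pos
    intro m hm
    by_cases hm0 : m = 0
    · subst hm0; simpa [gam] using hD0.1
    · have := (hD m (le_trans (le_trans (Finset.mem_Icc.1 hm).2 (Nat.sub_le _ _)) hiN)
        true (by simp [hm0])).1
      simpa [gam, hm0] using this
  have hA0m_pos : 0 < A0m a (k + 1) i := by
    apply Finset.prod_pos
    intro m hm
    exact (hD m (le_trans (Finset.mem_Icc.1 hm).2 hiN) false (by simp)).1
  have hdiv := laurent2_div (ne_of_gt hA0p_pos) hminus hplus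
  rw [zero_sub] at hdiv
  exact ⟨hdiv, div_pos hA0m_pos hA0p_pos⟩
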